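/- arXiv:1507.05724 — 3 statements merged into one kernel-verified Lean document; each statement's English description precedes it below -/
import Mathlib

section
/- Padding lemma for the anonymous-header construction: let s_0, …, s_{l−1} ∈ {0,1}^k and FS_0, …, FS_{l−1} ∈ {0,1}^{|FS|}, and let (FS_i, γ_i, β_i), 0 ≤ i ≤ l−1, and φ_0, …, φ_{l−1} be produced by the create_ahdr construction. Then for every 0 ≤ i ≤ l−1, the string β_i has length (r−1)c and its trailing i·c bits equal φ_i, i.e., (β_i)_[(r−1−i)c..(r−1)c−1] = φ_i. -/
/-- Bit strings: finite sequences of bits. -/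
abbrev BS : Type := List Bool

/-- Bitwise XOR of (equal-length) bit strings. -/
def bxor (σ τ : BS) : BS := List.zipWith xor σ τ

/-- Substring from bit position `a` through `b` inclusive (0-indexed). -/
def substr (σ : BS) (a b : ℕ) : BS := (σ.drop a).take (b + 1 - a)

/-- All-zero string of length `a`. -/
def zeros (a : ℕ) : BS := List.replicate a false

lemma take_bxor (n : ℕ) (a b : BS) : (bxor a b).take n = bxor (a.take n) (b.take n) :=
  List.take_zipWith

lemma drop_bxor (n : ℕ) (a b : BS) : (bxor a b).drop n = bxor (a.drop n) (b.drop n) :=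
  List.drop_zipWith

lemma bxor_length (a b : BS) : (bxor a b).length = min a.length b.length :=
  List.length_zipWith

lemma drop_append_ge (x y : BS) (n : ℕ) (h : x.length ≤ n) :
    (x ++ y).drop n = y.drop (n - x.length) := by
  conv_lhs => rw [show n = x.length + (n - x.length) from by omega]
  exact List.drop_length_add_append _

lemma bxor_cancel (a : BS) : ∀ b : BS, a.length ≤ b.length → bxor (bxor a b) b = a := by
  induction a with
  | nil => intro b _; simp [bxor]
  | cons x a ih =>
    intro b hb
    cases b with
    | nil => simp at hb
    | cons y b =>
      simp only [List.length_cons] at hb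
      have hab : a.length ≤ b.length := by omega
      have hih := ih b hab
      simp only [bxor, List.zipWith_cons_cons] at hih ⊢
      rw [show xor (xor x y) y = x from by cases x <;> cases y <;> rfl, hih]

/-- Padding lemma for the anonymous-header construction
(`create_ahdr`, Algorithm 4): each `β i` has length `(r-1)·c` and its
trailing `i·c` bits equal the padding string `φ i`. -/
theorem create_ahdr_padding
    (k fsl r l : ℕ) (hk : 1 ≤ k) (hfsl : k ≤ fsl) (hr : 1 ≤ r)
    (hl1 : 1 ≤ l) (hlr : l ≤ r)
    (c : ℕ) (hc : c = fsl + k)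
    (PRG2 : BS → BS) (hPRG2len : ∀ x, (PRG2 x).length = r * c)
    (MAC : BS → BS → BS) (hMAClen : ∀ key msg, (MAC key msg).length = k)
    (hPRG2 hMAC : BS → BS)
    (hhPRG2len : ∀ x, (hPRG2 x).length = k) (hhMAClen : ∀ x, (hMAC x).length = k)
    (s FS : ℕ → BS)
    (hs : ∀ i, i < l → (s i).length = k)
    (hFS : ∀ i, i < l → (FS i).length = fsl)
    (φ β γ : ℕ → BS)
    (hφ0 : φ 0 = [])
    (hφ : ∀ i, i + 1 < l → φ (i + 1) =
      bxor (φ i ++ zeros c) (substr (PRG2 (hPRG2 (s i))) ((r - 1 - i) * c) (r * c - 1)))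
    (ρ : BS) (hρ : ρ.length = (r - l) * c)
    (hβlast : β (l - 1) = ρ ++ φ (l - 1))
    (hγlast : γ (l - 1) = MAC (hMAC (s (l - 1))) (FS (l - 1) ++ β (l - 1)))
    (hβ : ∀ i, i + 1 < l → β i =
      bxor (FS (i + 1) ++ γ (i + 1) ++ substr (β (i + 1)) 0 ((r - 2) * c - 1))
           (substr (PRG2 (hPRG2 (s i))) 0 ((r - 1) * c - 1)))
    (hγ : ∀ i, i + 1 < l → γ i = MAC (hMAC (s i)) (FS i ++ β i)) :
    ∀ i, i < l → (β i).length = (r - 1) * c ∧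
      substr (β i) ((r - 1 - i) * c) ((r - 1) * c - 1) = φ i := by
  have hc2 : 2 ≤ c := by omega
  have hrc1 : 1 ≤ r * c := by
    have := Nat.mul_pos (by omega : 0 < r) (by omega : 0 < c); omega
  -- lengths of the padding strings
  have hφlen : ∀ i, i < l → (φ i).length = i * c := by
    intro i
    induction i with
    | zero => intro _; simp [hφ0]
    | succ j ihj =>
      intro hj
      have hjl : j < l := by omega
      have hE : r * c - (r - 1 - j) * c = (j + 1) * c := by
        rw [← Nat.sub_mul]; congr 1; omega
      have hsm : (j + 1) * c = j * c + c := Nat.succ_mul _ _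
      rw [hφ j hj, bxor_length, substr]
      simp only [List.length_take, List.length_drop, hPRG2len, List.length_append,
        ihj hjl, zeros, List.length_replicate]
      omega
  -- base case: i = l - 1
  have hbase : (β (l - 1)).length = (r - 1) * c ∧
      substr (β (l - 1)) ((r - 1 - (l - 1)) * c) ((r - 1) * c - 1) = φ (l - 1) := by
    have hφl : (φ (l - 1)).length = (l - 1) * c := hφlen _ (by omega)
    have hsplit : (r - 1) * c = (r - l) * c + (l - 1) * c := by
      rw [← Nat.add_mul]; congr 1; omega
    constructor
    · rw [hβlast, List.length_append, hρ, hφl, hsplit]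
    · have hrl : r - 1 - (l - 1) = r - l := by omega
      rw [hβlast, substr, hrl, List.drop_left' hρ, List.take_of_length_le (by rw [hφl]; omega)]
  -- downward induction
  have main : ∀ d i, i < l → l - 1 - i ≤ d →
      (β i).length = (r - 1) * c ∧
        substr (β i) ((r - 1 - i) * c) ((r - 1) * c - 1) = φ i := by
    intro d
    induction d with
    | zero =>
      intro i hi hd
      have : i = l - 1 := by omega
      rw [this]; exact hbase
    | succ d ihd =>
      intro i hi hd
      by_cases hil : i = l - 1
      · rw [hil]; exact hbase
      have hi1 : i + 1 < l := by omega
      obtain ⟨hlen1, htr1⟩ := ihd (i + 1) hi1 (by omega)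
      have hr2 : 2 ≤ r := by omega
      have f1 : (r - 1) * c = (r - 2) * c + c := by
        rw [show r - 1 = (r - 2) + 1 from by omega, Nat.succ_mul]
      have f2 : r * c = (r - 1) * c + c := by
        conv_lhs => rw [show r = (r - 1) + 1 from by omega]
        rw [Nat.succ_mul]
      have f3 : (r - 1) * c = (r - 1 - i) * c + i * c := by
        rw [← Nat.add_mul]; congr 1; omega
      have f4 : (r - 1 - i) * c = (r - 2 - i) * c + c := by
        rw [show r - 1 - i = (r - 2 - i) + 1 from by omega, Nat.succ_mul]
      have f5 : (r - 2) * c = (r - 2 - i) * c + i * c := by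
        rw [← Nat.add_mul]; congr 1; omega
      have hFS1 : (FS (i + 1)).length = fsl := hFS _ hi1
      have hγ1 : (γ (i + 1)).length = k := by
        by_cases h2 : i + 1 + 1 < l
        · rw [hγ (i + 1) h2]; exact hMAClen _ _
        · rw [show i + 1 = l - 1 from by omega, hγlast]; exact hMAClen _ _
      have hlen : (β i).length = (r - 1) * c := by
        rw [hβ i hi1, bxor_length, substr, substr]
        simp only [List.length_take, List.length_drop, List.length_append,
          hlen1, hPRG2len, hFS1, hγ1]
        omega
      refine ⟨hlen, ?_⟩
      by_cases hi0 : i = 0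
      · subst hi0
        rw [hφ0, substr, List.drop_eq_nil_of_le (by simp [hlen]), List.take_nil]
      -- now 1 ≤ i, hence 3 ≤ r and (r-2)*c ≥ 1
      have hE1pos : 1 ≤ (r - 2) * c := by
        have := Nat.mul_pos (by omega : 0 < r - 2) (by omega : 0 < c); omega
      have hφilen : (φ i).length = i * c := hφlen i (by omega)
      have hri : r - 1 - (i + 1) = r - 2 - i := by omega
      have hdropβ : (β (i + 1)).drop ((r - 2 - i) * c) = φ (i + 1) := by
        have h := htr1
        rw [substr, hri,
          List.take_of_length_le (by rw [List.length_drop, hlen1]; omega)] at h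
        exact h
      have hS : substr (β (i + 1)) 0 ((r - 2) * c - 1) = (β (i + 1)).take ((r - 2) * c) := by
        rw [substr, List.drop_zero]; congr 1; omega
      have hA : (FS (i + 1) ++ γ (i + 1) ++ substr (β (i + 1)) 0 ((r - 2) * c - 1)).drop
          ((r - 1 - i) * c) = (φ (i + 1)).take (i * c) := by
        rw [drop_append_ge _ _ _ (by rw [List.length_append, hFS1, hγ1]; omega),
          List.length_append, hFS1, hγ1, hS, List.drop_take,
          show (r - 1 - i) * c - (fsl + k) = (r - 2 - i) * c from by omega,
          show (r - 2) * c - (r - 2 - i) * c = i * c from by omega, hdropβ]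
      have hB : (substr (PRG2 (hPRG2 (s i))) 0 ((r - 1) * c - 1)).drop ((r - 1 - i) * c)
          = ((PRG2 (hPRG2 (s i))).drop ((r - 1 - i) * c)).take (i * c) := by
        rw [substr, List.drop_zero, show (r - 1) * c - 1 + 1 - 0 = (r - 1) * c from by omega,
          List.drop_take]
        congr 1; omega
      have hφ1 : φ (i + 1) =
          bxor (φ i ++ zeros c) ((PRG2 (hPRG2 (s i))).drop ((r - 1 - i) * c)) := by
        rw [hφ i hi1, substr]
        congr 1
        apply List.take_of_length_le
        rw [List.length_drop, hPRG2len]; omega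
      have hφQ : (φ (i + 1)).take (i * c) =
          bxor (φ i) (((PRG2 (hPRG2 (s i))).drop ((r - 1 - i) * c)).take (i * c)) := by
        rw [hφ1, take_bxor, List.take_left' hφilen]
      rw [hβ i hi1, substr,
        show (r - 1) * c - 1 + 1 - (r - 1 - i) * c = i * c from by omega,
        drop_bxor, hA, hB, hφQ,
        bxor_cancel _ _ (by rw [hφilen, List.length_take, List.length_drop, hPRG2len]; omega)]
      exact List.take_of_length_le (le_of_eq hφilen)
  intro i hi
  exact main (l - 1 - i) i hi le_rfl
end

section
/- The padding string ψ reconstructs the bits discarded during FS insertion (the 'full payload' lemma): let s, s_0, …, s_{l−1} ∈ {0,1}^k be keys and FS_0, …, FS_{l−1} ∈ {0,1}^{|FS|}. Define the truncated process P_0 = init_fs_payload(s), P_{i+1} = add_fs(s_i, FS_i, P_i), and the untruncated process Q_0 = init_fs_payload(s), Q_{i+1} = add_fs_full(s_i, FS_i, Q_i), where for a bit string Q of length rc + jc the untruncated insertion is add_fs_full(s, FS, Q) = MAC(h_MAC(s); T_[0..rc−k−1]) ‖ T with T = (FS ‖ Q) ⊕ (PRG0(h_PRG0(s))_[k..rc−1]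 ‖ 0^{(j+1)c}). Then (a) for every 0 ≤ i ≤ l, Q_i has length rc + ic and its first rc bits equal P_i (i.e., (Q_i)_[0..rc−1] = P_i); and (b) Q_l = P_l ‖ ψ, where ψ = init_fs_payload(s)_[(r−l)c..rc−1] ⊕ (⊕_{j=0}^{l−2} (PRG0(h_PRG0(s_j))_[(r−l+1+j)c..rc−1] ‖ 0^{(j+1)c})) is the padding string computed by retrieve_fses; that is, appending ψ to P_l yields exactly the payload that would have resulted had no node dropped any trailing bits before inserting its FS. -/
lemma bxor_zeros (a : BS) (n : ℕ) (h : a.length ≤ n) : bxor a (zeros n) = a := by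
  induction a generalizing n with
  | nil => simp [bxor]
  | cons x xs ih =>
    cases n with
    | zero => simp at h
    | succ m =>
      simp only [zeros, List.replicate_succ, bxor, List.zipWith_cons_cons] at *
      simp only [List.length_cons, Nat.succ_le_succ_iff] at h
      rw [show xor x false = x by simp]
      exact congrArg (x :: ·) (ih m h)

lemma bxor_take_left (a b : BS) (n : ℕ) (h : b.length ≤ n) : bxor (a.take n) b = bxor a b := by
  have h1 : bxor (a.take n) b = bxor (a.take n) (b.take n) := by
    rw [List.take_of_length_le h]
  rw [h1, ← take_bxor, List.take_of_length_le]
  rw [bxor_length]; omega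

lemma bxor_append (a b x y : BS) (h : a.length = x.length) :
    bxor (a ++ b) (x ++ y) = bxor a x ++ bxor b y :=
  List.zipWith_append h

lemma foldl_bxor_take (n : ℕ) (L : List ℕ) (f : ℕ → BS) (base : BS) :
    (L.foldl (fun a j => bxor a (f j)) base).take n
      = L.foldl (fun a j => bxor a ((f j).take n)) (base.take n) := by
  induction L generalizing base with
  | nil => simp
  | cons x xs ih => simp only [List.foldl_cons, ih, take_bxor]

lemma foldl_bxor_drop (n : ℕ) (L : List ℕ) (f : ℕ → BS) (base : BS) :
    (L.foldl (fun a j => bxor a (f j)) base).drop n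
      = L.foldl (fun a j => bxor a ((f j).drop n)) (base.drop n) := by
  induction L generalizing base with
  | nil => simp
  | cons x xs ih => simp only [List.foldl_cons, ih, drop_bxor]

lemma foldl_bxor_congr (L : List ℕ) (f g : ℕ → BS) (b1 b2 : BS) (hb : b1 = b2)
    (h : ∀ j ∈ L, f j = g j) :
    L.foldl (fun a j => bxor a (f j)) b1 = L.foldl (fun a j => bxor a (g j)) b2 := by
  induction L generalizing b1 b2 with
  | nil => simpa
  | cons x xs ih =>
    simp only [List.foldl_cons]
    exact ih _ _ (by rw [hb, h x (by simp)]) (fun j hj => h j (by simp [hj]))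

lemma drop_append_len (a b : BS) (n m : ℕ) (h : a.length = n) : (a ++ b).drop (n + m) = b.drop m := by
  subst h; exact List.drop_length_add_append m

/-- The padding string `ψ` reconstructs the bits discarded during
FS insertion (the "full payload" lemma): writing `P` for the truncated
insertion process (`add_fs`) and `Q` for the untruncated one (`add_fs_full`),
(a) for every `i ≤ l`, `Q i` has length `rc + ic` and its first `rc` bits
equal `P i`; and (b) `Q l = P l ‖ ψ` where `ψ` is the padding string computed
by `retrieve_fses`. -/
theorem fs_payload_full_payload_lemma
    (k fsl r l : ℕ) (hk : 1 ≤ k) (hfsl : k ≤ fsl) (hr : 1 ≤ r)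
    (hl1 : 1 ≤ l) (hlr : l ≤ r)
    (c : ℕ) (hc : c = fsl + k)
    (PRG0 PRG1 : BS → BS)
    (hPRG0len : ∀ x, (PRG0 x).length = r * c)
    (hPRG1len : ∀ x, (PRG1 x).length = r * c)
    (MAC : BS → BS → BS) (hMAClen : ∀ key msg, (MAC key msg).length = k)
    (hPRG0 hPRG1 hMAC : BS → BS)
    (hhPRG0len : ∀ x, (hPRG0 x).length = k)
    (hhPRG1len : ∀ x, (hPRG1 x).length = k)
    (hhMAClen : ∀ x, (hMAC x).length = k)
    (s : BS) (hslen : s.length = k)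
    (sk FS : ℕ → BS)
    (hsk : ∀ i, i < l → (sk i).length = k)
    (hFS : ∀ i, i < l → (FS i).length = fsl)
    (initFsPayload : BS → BS)
    (hinit : ∀ x, initFsPayload x = PRG1 (hPRG1 x))
    (addFs : BS → BS → BS → BS)
    (haddFs : ∀ key F P, addFs key F P =
      MAC (hMAC key)
          (bxor (F ++ substr P 0 ((r - 1) * c - 1)) (substr (PRG0 (hPRG0 key)) k (r * c - 1)))
        ++ bxor (F ++ substr P 0 ((r - 1) * c - 1)) (substr (PRG0 (hPRG0 key)) k (r * c - 1)))
    -- the untruncated insertion: for Q of length rc + jc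
    (addFsFull : BS → BS → BS → BS)
    (haddFsFull : ∀ key F (Q : BS), addFsFull key F Q =
      MAC (hMAC key)
          (substr (bxor (F ++ Q)
            (substr (PRG0 (hPRG0 key)) k (r * c - 1)
              ++ zeros (((Q.length - r * c) / c + 1) * c))) 0 (r * c - k - 1))
        ++ bxor (F ++ Q)
            (substr (PRG0 (hPRG0 key)) k (r * c - 1)
              ++ zeros (((Q.length - r * c) / c + 1) * c)))
    -- the truncated process
    (P : ℕ → BS)
    (hP0 : P 0 = initFsPayload s)
    (hPstep : ∀ i, i < l → P (i + 1) = addFs (sk i) (FS i) (P i))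
    -- the untruncated process
    (Q : ℕ → BS)
    (hQ0 : Q 0 = initFsPayload s)
    (hQstep : ∀ i, i < l → Q (i + 1) = addFsFull (sk i) (FS i) (Q i))
    -- the padding string ψ computed by retrieve_fses
    (ψ : BS)
    (hψ : ψ = (List.range (l - 1)).foldl
      (fun acc j =>
        bxor acc (substr (PRG0 (hPRG0 (sk j))) ((r - l + 1 + j) * c) (r * c - 1)
          ++ zeros ((j + 1) * c)))
      (substr (initFsPayload s) ((r - l) * c) (r * c - 1))) :
    (∀ i, i ≤ l → (Q i).length = r * c + i * c ∧ substr (Q i) 0 (r * c - 1) = P i) ∧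
      Q l = P l ++ ψ := by
  -- basic arithmetic facts
  have hc0 : 0 < c := by omega
  have hrc : r * c = (r-1)*c + c := by
    have := Nat.sub_mul r 1 c
    have : c ≤ r * c := by calc c = 1*c := (one_mul c).symm
                                _ ≤ r*c := Nat.mul_le_mul_right c hr
    omega
  have hrc1 : 1 ≤ r * c := by omega
  -- full-length substr lemma
  have hsubfull : ∀ (x : BS) (a : ℕ), x.length = r*c → substr x a (r*c - 1) = x.drop a := by
    intro x a hx
    unfold substr
    rw [show r*c - 1 + 1 - a = r*c - a by omega]
    exact List.take_of_length_le (by rw [List.length_drop, hx])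
  have hGd : ∀ key : BS, substr (PRG0 (hPRG0 key)) k (r*c - 1) = (PRG0 (hPRG0 key)).drop k :=
    fun key => hsubfull _ k (hPRG0len _)
  have hGdlen : ∀ key : BS, ((PRG0 (hPRG0 key)).drop k).length = r*c - k := by
    intro key; rw [List.length_drop, hPRG0len]
  -- normalized step for P
  have normP : ∀ i, i < l → (P i).length = r*c →
      P (i+1) = MAC (hMAC (sk i))
          (bxor (FS i ++ (P i).take ((r-1)*c)) ((PRG0 (hPRG0 (sk i))).drop k))
        ++ bxor (FS i ++ (P i).take ((r-1)*c)) ((PRG0 (hPRG0 (sk i))).drop k) := by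
    intro i hi hlen
    rw [hPstep i hi, haddFs, hGd]
    have hsub : substr (P i) 0 ((r-1)*c - 1) = (P i).take ((r-1)*c - 1 + 1) := by
      simp [substr]
    have hbody : bxor (FS i ++ (P i).take ((r-1)*c - 1 + 1)) ((PRG0 (hPRG0 (sk i))).drop k)
        = bxor (FS i ++ (P i).take ((r-1)*c)) ((PRG0 (hPRG0 (sk i))).drop k) := by
      rw [← bxor_take_left (FS i ++ (P i).take ((r-1)*c - 1 + 1)) _ (fsl + (r-1)*c)
            (by rw [hGdlen]; omega),
          ← bxor_take_left (FS i ++ (P i).take ((r-1)*c)) _ (fsl + (r-1)*c)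
            (by rw [hGdlen]; omega)]
      congr 1
      rw [show fsl + (r-1)*c = (FS i).length + (r-1)*c by rw [hFS i hi],
          List.take_append, List.take_append, List.take_take, List.take_take]
      congr 2
      omega
    rw [hsub, hbody]
  -- lengths of P
  have lenP : ∀ i, i ≤ l → (P i).length = r*c := by
    intro i
    induction i with
    | zero => intro _; rw [hP0, hinit]; exact hPRG1len _
    | succ n ih =>
      intro h
      have hn : n < l := by omega
      have hPn := ih (by omega)
      rw [normP n hn hPn, List.length_append, hMAClen, bxor_length, List.length_append,
          hFS n hn, List.length_take, hPn, hGdlen]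
      omega
  -- the tail function
  set tl : ℕ → BS :=
    fun n => (((List.range n).reverse).map (fun j => (P j).drop ((r-1)*c))).flatten with htl
  have htl0 : tl 0 = [] := by simp [htl]
  have htls : ∀ i, tl (i+1) = (P i).drop ((r-1)*c) ++ tl i := by
    intro i; simp [htl, List.range_succ]
  -- main induction for Q
  have mainQ : ∀ i, i ≤ l → (tl i).length = i*c ∧ Q i = P i ++ tl i := by
    intro i
    induction i with
    | zero =>
      intro _
      refine ⟨by simp [htl0], ?_⟩
      rw [hQ0, hP0, htl0, List.append_nil]
    | succ n ih =>
      intro h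
      have hn : n < l := by omega
      obtain ⟨hlt, hQn⟩ := ih (by omega)
      have hPn := lenP n (le_of_lt hn)
      have hQlen : (Q n).length = r*c + n*c := by rw [hQn, List.length_append, hPn, hlt]
      have hnc : (n+1)*c = n*c + c := by ring
      have hz : (((Q n).length - r*c)/c + 1) * c = (n+1)*c := by
        rw [hQlen, show r*c + n*c - r*c = n*c by omega, Nat.mul_div_cancel n hc0]
      rw [hQstep n hn, haddFsFull, hGd, hz]
      have hsplitL : FS n ++ Q n
          = (FS n ++ (P n).take ((r-1)*c)) ++ ((P n).drop ((r-1)*c) ++ tl n) := by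
        rw [hQn, List.append_assoc, ← List.append_assoc ((P n).take ((r-1)*c)),
            List.take_append_drop]
      have hT : bxor (FS n ++ Q n) ((PRG0 (hPRG0 (sk n))).drop k ++ zeros ((n+1)*c))
          = bxor (FS n ++ (P n).take ((r-1)*c)) ((PRG0 (hPRG0 (sk n))).drop k)
            ++ ((P n).drop ((r-1)*c) ++ tl n) := by
        rw [hsplitL, bxor_append _ _ _ _
            (by rw [List.length_append, hFS n hn, List.length_take, hPn, hGdlen]; omega)]
        congr 1
        apply bxor_zeros
        rw [List.length_append, List.length_drop, hPn, hlt]; omega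
      rw [hT]
      have hblen : (bxor (FS n ++ (P n).take ((r-1)*c)) ((PRG0 (hPRG0 (sk n))).drop k)).length
          = r*c - k := by
        rw [bxor_length, List.length_append, hFS n hn, List.length_take, hPn, hGdlen]; omega
      have hsub : substr (bxor (FS n ++ (P n).take ((r-1)*c)) ((PRG0 (hPRG0 (sk n))).drop k)
            ++ ((P n).drop ((r-1)*c) ++ tl n)) 0 (r*c - k - 1)
          = bxor (FS n ++ (P n).take ((r-1)*c)) ((PRG0 (hPRG0 (sk n))).drop k) := by
        unfold substr
        rw [List.drop_zero, show r*c - k - 1 + 1 - 0 = r*c - k by omega]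
        exact List.take_left' hblen
      rw [hsub]
      constructor
      · rw [htls, List.length_append, List.length_drop, hPn, hlt]; omega
      · rw [normP n hn hPn, htls, List.append_assoc]
  -- the suffix lemma
  have suf : ∀ i, i ≤ l → ∀ m, i ≤ m →
      (P i).drop (m*c) = (List.range i).foldl
        (fun acc j => bxor acc ((PRG0 (hPRG0 (sk j))).drop ((m - i + 1 + j)*c)))
        ((PRG1 (hPRG1 s)).drop ((m - i)*c)) := by
    intro i
    induction i with
    | zero => intro _ m _; simp [hP0, hinit]
    | succ n ih =>
      intro hle m hm
      have hn : n < l := by omega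
      have hPn := lenP n (le_of_lt hn)
      have hcm : c ≤ m*c := by
        calc c = 1*c := (one_mul c).symm
        _ ≤ m*c := Nat.mul_le_mul_right c (by omega)
      have hmm : (m-1)*c = m*c - c := Nat.sub_mul m 1 c ▸ (by rw [one_mul])
      rw [normP n hn hPn,
          show m*c = k + (m*c - k) by omega,
          drop_append_len _ _ k (m*c - k) (hMAClen _ _),
          drop_bxor,
          show m*c - k = fsl + ((m-1)*c) by omega,
          drop_append_len _ _ fsl _ (hFS n hn),
          List.drop_take, List.drop_drop,
          show k + (fsl + (m-1)*c) = m*c by omega,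
          bxor_take_left _ _ _ (by
            rw [List.length_drop, hPRG0len]
            have h1 : (r-1)*c = r*c - c := Nat.sub_mul r 1 c ▸ (by rw [one_mul])
            omega),
          ih (by omega) (m-1) (by omega),
          List.range_succ, List.foldl_append]
      simp only [List.foldl_cons, List.foldl_nil]
      congr 1
      · apply foldl_bxor_congr
        · rw [show m - 1 - n = m - (n+1) by omega]
        · intro j hj
          rw [show m - 1 - n + 1 + j = m - (n+1) + 1 + j by omega]
      · rw [show m - (n+1) + 1 + n = m by omega]
  -- the psi lemma
  have psi : ∀ i, 1 ≤ i → i ≤ l → tl i = (List.range (i-1)).foldl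
      (fun acc j => bxor acc
        ((PRG0 (hPRG0 (sk j))).drop ((r - i + 1 + j)*c) ++ zeros ((j+1)*c)))
      ((PRG1 (hPRG1 s)).drop ((r - i)*c)) := by
    intro i
    induction i with
    | zero => intro h1 _; exact absurd h1 (by omega)
    | succ n ih =>
      intro h1 h2
      rcases Nat.eq_zero_or_pos n with hn0 | hn1
      · subst hn0
        rw [htls, htl0, hP0, hinit, List.append_nil]
        simp
      · have hn : n < l := by omega
        have hnl : n ≤ l := le_of_lt hn
        have hPn := lenP n hnl
        obtain ⟨htln, _⟩ := mainQ n hnl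
        have ihn := ih hn1 hnl
        have hnr : n + 1 ≤ r := by omega
        rw [htls, ihn, Nat.add_sub_cancel]
        rw [← List.take_append_drop c ((List.range n).foldl
          (fun acc j => bxor acc
            ((PRG0 (hPRG0 (sk j))).drop ((r - (n+1) + 1 + j)*c) ++ zeros ((j+1)*c)))
          ((PRG1 (hPRG1 s)).drop ((r - (n+1))*c)))]
      -- piece lengths facts
        have hGjlen : ∀ j, j < n → c ≤ ((PRG0 (hPRG0 (sk j))).drop ((r - (n+1) + 1 + j)*c)).length := by
          intro j hj
          rw [List.length_drop, hPRG0len]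
          have h1 : (r - (n+1) + 1 + j)*c = (r-(n+1)+1+j)*c := rfl
          have h2 : (r-(n+1)+1+j) + (n - j) = r := by omega
          have h3 : (r-(n+1)+1+j)*c + (n-j)*c = r*c := by rw [← Nat.add_mul, h2]
          have h4 : c ≤ (n-j)*c := by
            calc c = 1*c := (one_mul c).symm
            _ ≤ (n-j)*c := Nat.mul_le_mul_right c (by omega)
          omega
        congr 1
        · -- first block
          rw [foldl_bxor_take]
          have hd : (P n).drop ((r-1)*c) = ((P n).drop ((r-1)*c)).take c :=
            (List.take_of_length_le (by rw [List.length_drop, hPn]; omega)).symm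
          rw [hd, suf n hnl (r-1) (by omega), foldl_bxor_take]
          apply foldl_bxor_congr
          · rw [show r-1-n = r-(n+1) by omega]
          · intro j hj
            have hjn : j < n := List.mem_range.mp hj
            rw [List.take_append_of_le_length (hGjlen j hjn),
                show r-1-n+1+j = r-(n+1)+1+j by omega]
        · -- remaining blocks
          rw [foldl_bxor_drop]
          have hrange : List.range n = List.range (n-1) ++ [n-1] := by
            rw [← List.range_succ]; congr 1; omega
          rw [hrange, List.foldl_append]
          simp only [List.foldl_cons, List.foldl_nil]
          have hlast : ((PRG0 (hPRG0 (sk (n-1)))).drop ((r - (n+1) + 1 + (n-1))*c)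
              ++ zeros ((n-1+1)*c)).drop c = zeros (n*c) := by
            rw [List.drop_left' (by
                rw [List.length_drop, hPRG0len]
                have h1 : (r - (n+1) + 1 + (n-1)) + 1 = r := by omega
                have h3 : (r-(n+1)+1+(n-1))*c + 1*c = r*c := by rw [← Nat.add_mul, h1]
                omega),
              show n-1+1 = n by omega]
          rw [hlast]
          have hfold : (List.range (n-1)).foldl
              (fun a j => bxor a
                (((PRG0 (hPRG0 (sk j))).drop ((r - (n+1) + 1 + j)*c) ++ zeros ((j+1)*c)).drop c))
              (((PRG1 (hPRG1 s)).drop ((r - (n+1))*c)).drop c)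
            = (List.range (n-1)).foldl
              (fun acc j => bxor acc
                ((PRG0 (hPRG0 (sk j))).drop ((r - n + 1 + j)*c) ++ zeros ((j+1)*c)))
              ((PRG1 (hPRG1 s)).drop ((r - n)*c)) := by
            apply foldl_bxor_congr
            · rw [List.drop_drop, show (r - (n+1))*c + c = (r-n)*c by
                have h2 : (r-(n+1)) + 1 = r - n := by omega
                have h3 : (r-(n+1))*c + 1*c = (r-n)*c := by rw [← Nat.add_mul, h2]
                omega]
            · intro j hj
              have hjn : j < n - 1 := List.mem_range.mp hj
              rw [List.drop_append_of_le_length (hGjlen j (by omega)),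
                  List.drop_drop,
                  show (r - (n+1) + 1 + j)*c + c = (r - n + 1 + j)*c by
                    have h2 : (r-(n+1)+1+j) + 1 = r - n + 1 + j := by omega
                    have h3 : (r-(n+1)+1+j)*c + 1*c = (r-n+1+j)*c := by rw [← Nat.add_mul, h2]
                    omega]
          rw [hfold, bxor_zeros _ _ (by rw [← ihn, htln])]
  -- assemble
  refine ⟨fun i hi => ?_, ?_⟩
  · obtain ⟨hlt, hQi⟩ := mainQ i hi
    have hPi := lenP i hi
    constructor
    · rw [hQi, List.length_append, hPi, hlt]
    · unfold substr
      rw [List.drop_zero, show r*c - 1 + 1 - 0 = r*c by omega, hQi, List.take_left' hPi]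
  · obtain ⟨_, hQl⟩ := mainQ l le_rfl
    rw [hQl, psi l hl1 le_rfl, hψ]
    congr 1
    apply foldl_bxor_congr
    · rw [hinit, hsubfull _ _ (hPRG1len _)]
    · intro j hj
      rw [hsubfull _ _ (hPRG0len _)]
end

section
/- Correctness of the nested anonymous-header construction for sender-receiver anonymity: let s_0, …, s_{l−1} ∈ {0,1}^k, FS_0, …, FS_{l−1} ∈ {0,1}^{|FS|}, and let A ∈ {0,1}^{rc} be a nested anonymous header; let (FS_i, γ_i, β_i), 0 ≤ i ≤ l−1, be the headers produced by the nested construction (Algorithm 5). Then: (a) for every 0 ≤ i ≤ l−1 the MAC verification succeeds, i.e., γ_i = MAC(h_MAC(s_i); FS_i ‖ β_i); (b) for every 0 ≤ i ≤ l−2, per-hop processing of the header at node i yields exactly the header constructed for node i+1, i.e., (β_i ‖ 0^{c}) ⊕ PRG0(h_PRG0(s_i)) = FS_{i+1} ‖ γ_{i+1} ‖ β_{i+1}; and (c) the first rc bits of the output of the per-hop processing at the final node l−1 equal A, i.e., ((β_{l−1} ‖ 0^{c}) ⊕ PRG0(h_PRG0(s_{l−1})))_[0..rc−1] = A, so the rendezvous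 node recovers the nested header A. -/
lemma bxor_length_s9 (σ τ : BS) : (bxor σ τ).length = min σ.length τ.length :=
  List.length_zipWith

lemma bxor_take (σ τ : BS) (n : ℕ) : (bxor σ τ).take n = bxor (σ.take n) (τ.take n) :=
  List.take_zipWith

lemma bxor_drop (σ τ : BS) (n : ℕ) : (bxor σ τ).drop n = bxor (σ.drop n) (τ.drop n) :=
  List.drop_zipWith

lemma bxor_cancel_s9 (σ : BS) : ∀ τ : BS, σ.length = τ.length → bxor (bxor σ τ) τ = σ := by
  induction σ with
  | nil => intro τ h; simp [bxor]
  | cons a σ ih =>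
    intro τ h
    cases τ with
    | nil => simp at h
    | cons b τ =>
      simp only [bxor, List.zipWith_cons_cons] at *
      have h' : σ.length = τ.length := by simpa using h
      have := ih τ h'
      rw [this, show xor (xor a b) b = a by cases a <;> cases b <;> rfl]

lemma zeros_length (n : ℕ) : (zeros n).length = n := List.length_replicate

lemma zeros_bxor (τ : BS) : bxor (zeros τ.length) τ = τ := by
  induction τ with
  | nil => rfl
  | cons b τ ih =>
    simp only [zeros, List.length_cons, List.replicate_succ, bxor,
      List.zipWith_cons_cons] at *
    rw [ih, show xor false b = b by cases b <;> rfl]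

lemma zeros_bxor' (τ : BS) (n : ℕ) (h : τ.length = n) : bxor (zeros n) τ = τ := by
  subst h; exact zeros_bxor τ

lemma substr_take (σ : BS) (m : ℕ) (hm : 1 ≤ m) : substr σ 0 (m - 1) = σ.take m := by
  unfold substr; rw [List.drop_zero]; congr 1; omega

lemma take_of_len_le (σ : BS) (n : ℕ) (h : σ.length ≤ n) : σ.take n = σ :=
  List.take_of_length_le h

lemma substr_drop (σ : BS) (a N : ℕ) (hN : σ.length = N) (h1 : 1 ≤ N) :
    substr σ a (N - 1) = σ.drop a := by
  unfold substr
  rw [take_of_len_le]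
  rw [List.length_drop]; omega

/-- Correctness of the nested anonymous-header construction
(Algorithm 5) for sender-receiver anonymity: (a) every per-hop MAC
verification succeeds; (b) per-hop processing of the header at node `i`
yields exactly the header constructed for node `i+1`; and (c) the first `rc`
bits of the output of the per-hop processing at the final node `l-1` equal
the nested header `A`, so the rendezvous node recovers `A`. -/
theorem nested_ahdr_correctness
    (k fsl r l : ℕ) (hk : 1 ≤ k) (hfsl : k ≤ fsl) (hr : 1 ≤ r)
    (hl1 : 1 ≤ l) (hlr : l ≤ r)
    (c : ℕ) (hc : c = fsl + k)
    (PRG0 : BS → BS) (hPRG0len : ∀ x, (PRG0 x).length = 2 * r * c)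
    (MAC : BS → BS → BS) (hMAClen : ∀ key msg, (MAC key msg).length = k)
    (hPRG0 hMAC : BS → BS)
    (hhPRG0len : ∀ x, (hPRG0 x).length = k) (hhMAClen : ∀ x, (hMAC x).length = k)
    (s FS : ℕ → BS)
    (hs : ∀ i, i < l → (s i).length = k)
    (hFS : ∀ i, i < l → (FS i).length = fsl)
    -- the nested anonymous header
    (A : BS) (hA : A.length = r * c)
    -- the nested construction (Algorithm 5)
    (φ β γ : ℕ → BS)
    (hφ0 : φ 0 = [])
    (hφ : ∀ i, i + 1 < l → φ (i + 1) =
      bxor (φ i ++ zeros c)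
        (substr (PRG0 (hPRG0 (s i))) ((2 * r - 1 - i) * c) (2 * r * c - 1)))
    (ρ : BS) (hρ : ρ.length = (r - l) * c)
    (hβlast : β (l - 1) =
      bxor (A ++ ρ) (substr (PRG0 (hPRG0 (s (l - 1)))) 0 ((2 * r - l) * c - 1))
        ++ φ (l - 1))
    (hγlast : γ (l - 1) = MAC (hMAC (s (l - 1))) (FS (l - 1) ++ β (l - 1)))
    (hβ : ∀ i, i + 1 < l → β i =
      bxor (FS (i + 1) ++ γ (i + 1) ++ substr (β (i + 1)) 0 ((2 * r - 2) * c - 1))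
           (substr (PRG0 (hPRG0 (s i))) 0 ((2 * r - 1) * c - 1)))
    (hγ : ∀ i, i + 1 < l → γ i = MAC (hMAC (s i)) (FS i ++ β i)) :
    (∀ i, i < l → γ i = MAC (hMAC (s i)) (FS i ++ β i)) ∧
      (∀ i, i + 1 < l →
        bxor (β i ++ zeros c) (PRG0 (hPRG0 (s i)))
          = FS (i + 1) ++ γ (i + 1) ++ β (i + 1)) ∧
      substr (bxor (β (l - 1) ++ zeros c) (PRG0 (hPRG0 (s (l - 1)))))
          0 (r * c - 1) = A := by
  have hc1 : 1 ≤ c := by omega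
  set P : ℕ → BS := fun j => PRG0 (hPRG0 (s j)) with hPdef
  have hP : ∀ j, (P j).length = 2 * r * c := fun j => hPRG0len _
  -- generic mult facts
  have mle : ∀ a b : ℕ, a ≤ b → a * c ≤ b * c := fun a b h => Nat.mul_le_mul_right c h
  have mone : ∀ a : ℕ, 1 ≤ a → 1 ≤ a * c := fun a h => by
    calc 1 = 1 * 1 := rfl
    _ ≤ a * c := Nat.mul_le_mul h hc1
  -- part (a)
  have parta : ∀ i, i < l → γ i = MAC (hMAC (s i)) (FS i ++ β i) := by
    intro i hi
    by_cases h : i + 1 < l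
    · exact hγ i h
    · rw [show i = l - 1 by omega]; exact hγlast
  have hγlen : ∀ i, i < l → (γ i).length = k := fun i hi => by
    rw [parta i hi]; exact hMAClen _ _
  -- clean φ recurrence
  have hφ' : ∀ i, i + 1 < l → φ (i + 1) =
      bxor (φ i ++ zeros c) ((P i).drop ((2 * r - 1 - i) * c)) := by
    intro i h
    rw [hφ i h, substr_drop _ _ _ (hP i) (mone _ (by omega))]
  -- φ lengths
  have φlen : ∀ j, j < l → (φ j).length = j * c := by
    intro j
    induction j with
    | zero => intro _; simp [hφ0]
    | succ i ih =>
      intro hj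
      rw [hφ' i hj, bxor_length_s9, List.length_append, zeros_length,
        ih (by omega), List.length_drop, hP]
      have e1 : 2 * r * c - (2 * r - 1 - i) * c = (i + 1) * c := by
        rw [← Nat.sub_mul, show 2 * r - (2 * r - 1 - i) = i + 1 by omega]
      rw [e1, show i * c + c = (i + 1) * c by rw [Nat.add_mul, one_mul], min_self]
  -- clean β recurrence
  have hβ' : ∀ i, i + 1 < l → β i =
      bxor (FS (i + 1) ++ γ (i + 1) ++ (β (i + 1)).take ((2 * r - 2) * c))
           ((P i).take ((2 * r - 1) * c)) := by
    intro i h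
    rw [hβ i h, substr_take _ _ (mone _ (by omega)), substr_take _ _ (mone _ (by omega))]
  have hβlast' : β (l - 1) =
      bxor (A ++ ρ) ((P (l - 1)).take ((2 * r - l) * c)) ++ φ (l - 1) := by
    rw [hβlast, substr_take _ _ (mone _ (by omega))]
  -- the key downward induction: length + invariant
  have key : ∀ d j, j + d + 1 = l →
      (β j).length = (2 * r - 1) * c ∧ (β j).drop ((2 * r - 1 - j) * c) = φ j := by
    intro d
    induction d with
    | zero =>
      intro j hj
      have hj' : j = l - 1 := by omega
      subst hj'
      have hAρ : (A ++ ρ).length = (2 * r - l) * c := by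
        rw [List.length_append, hA, hρ, ← Nat.add_mul,
          show r + (r - l) = 2 * r - l by omega]
      have htlen : ((P (l - 1)).take ((2 * r - l) * c)).length = (2 * r - l) * c := by
        rw [List.length_take, hP, min_eq_left (mle _ _ (by omega))]
      have hblen : (bxor (A ++ ρ) ((P (l - 1)).take ((2 * r - l) * c))).length
          = (2 * r - l) * c := by
        rw [bxor_length_s9, hAρ, htlen, min_self]
      constructor
      · rw [hβlast', List.length_append, hblen, φlen (l - 1) (by omega),
          ← Nat.add_mul, show 2 * r - l + (l - 1) = 2 * r - 1 by omega]
      · rw [hβlast', show 2 * r - 1 - (l - 1) = 2 * r - l by omega,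
          List.drop_left' hblen]
    | succ d ih =>
      intro j hj
      obtain ⟨len1, inv1⟩ := ih (j + 1) (by omega)
      have hjl : j + 1 < l := by omega
      have hXlen : (FS (j + 1) ++ γ (j + 1) ++ (β (j + 1)).take ((2 * r - 2) * c)).length
          = (2 * r - 1) * c := by
        rw [List.length_append, List.length_append, hFS _ hjl, hγlen _ hjl,
          List.length_take, len1, min_eq_left (mle _ _ (by omega)),
          show (2 * r - 1) * c = (2 * r - 2) * c + c by
            rw [show 2 * r - 1 = 2 * r - 2 + 1 by omega, Nat.add_mul, one_mul]]
        omega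
      have hTlen : ((P j).take ((2 * r - 1) * c)).length = (2 * r - 1) * c := by
        rw [List.length_take, hP, min_eq_left (mle _ _ (by omega))]
      constructor
      · rw [hβ' j hjl, bxor_length_s9, hXlen, hTlen, min_self]
      · rw [hβ' j hjl, bxor_drop]
        -- drop of the X part
        have hdX : (FS (j + 1) ++ γ (j + 1) ++ (β (j + 1)).take ((2 * r - 2) * c)).drop
            ((2 * r - 1 - j) * c) = ((β (j + 1)).drop ((2 * r - 2 - j) * c)).take (j * c) := by
          have hfg : (FS (j + 1) ++ γ (j + 1)).length = c := by
            rw [List.length_append, hFS _ hjl, hγlen _ hjl]; omega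
          rw [show (2 * r - 1 - j) * c = (FS (j + 1) ++ γ (j + 1)).length + (2 * r - 2 - j) * c by
              rw [hfg, show (2 * r - 1 - j) * c = (1 + (2 * r - 2 - j)) * c by
                congr 1; omega, Nat.add_mul, one_mul],
            List.drop_length_add_append, List.drop_take]
          congr 1
          rw [← Nat.sub_mul]; congr 1; omega
        rw [hdX, show (2 * r - 2 - j) * c = (2 * r - 1 - (j + 1)) * c by congr 1; omega,
          inv1, hφ' j hjl, bxor_take, List.take_left' (φlen j (by omega)),
          List.drop_take, show (2 * r - 1) * c - (2 * r - 1 - j) * c = j * c by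
            rw [← Nat.sub_mul]; congr 1; omega]
        apply bxor_cancel_s9
        rw [φlen j (by omega), List.length_take, List.length_drop, hP,
          show 2 * r * c - (2 * r - 1 - j) * c = (j + 1) * c by
            rw [← Nat.sub_mul]; congr 1; omega,
          min_eq_left (mle _ _ (by omega))]
  have βlen : ∀ j, j < l → (β j).length = (2 * r - 1) * c := fun j hj =>
    (key (l - 1 - j) j (by omega)).1
  have inv : ∀ j, j < l → (β j).drop ((2 * r - 1 - j) * c) = φ j := fun j hj =>
    (key (l - 1 - j) j (by omega)).2
  -- part (b)
  have partb : ∀ i, i + 1 < l →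
      bxor (β i ++ zeros c) (P i) = FS (i + 1) ++ γ (i + 1) ++ β (i + 1) := by
    intro i h
    have hil : i < l := by omega
    have hTlen : ((P i).take ((2 * r - 1) * c)).length = (2 * r - 1) * c := by
      rw [List.length_take, hP, min_eq_left (mle _ _ (by omega))]
    have hXlen : (FS (i + 1) ++ γ (i + 1) ++ (β (i + 1)).take ((2 * r - 2) * c)).length
        = (2 * r - 1) * c := by
      rw [List.length_append, List.length_append, hFS _ h, hγlen _ h,
        List.length_take, βlen _ h, min_eq_left (mle _ _ (by omega)),
        show (2 * r - 1) * c = (2 * r - 2) * c + c by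
          rw [show 2 * r - 1 = 2 * r - 2 + 1 by omega, Nat.add_mul, one_mul]]
      omega
    -- the crucial tail fact
    have hdrop : (β (i + 1)).drop ((2 * r - 2) * c) = (P i).drop ((2 * r - 1) * c) := by
      have h1 : (β (i + 1)).drop ((2 * r - 2) * c)
          = (φ (i + 1)).drop (i * c) := by
        rw [← inv (i + 1) h, List.drop_drop]
        congr 1
        rw [show 2 * r - 1 - (i + 1) = 2 * r - 2 - i by omega, ← Nat.add_mul]
        congr 1; omega
      rw [h1, hφ' i h, bxor_drop, List.drop_drop,
        show (2 * r - 1 - i) * c + i * c = (2 * r - 1) * c by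
          rw [← Nat.add_mul]; congr 1; omega,
        List.drop_left' (φlen i hil)]
      have hlend : ((P i).drop ((2 * r - 1) * c)).length = c := by
        rw [List.length_drop, hP, show 2 * r * c - (2 * r - 1) * c = c by
          rw [← Nat.sub_mul, show 2 * r - (2 * r - 1) = 1 by omega, one_mul]]
      exact zeros_bxor' _ _ hlend
    calc bxor (β i ++ zeros c) (P i)
        = bxor (β i ++ zeros c)
            ((P i).take ((2 * r - 1) * c) ++ (P i).drop ((2 * r - 1) * c)) := by
          rw [List.take_append_drop]
      _ = bxor (β i) ((P i).take ((2 * r - 1) * c))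
            ++ bxor (zeros c) ((P i).drop ((2 * r - 1) * c)) := by
          rw [bxor_append]; rw [βlen i hil, hTlen]
      _ = (FS (i + 1) ++ γ (i + 1) ++ (β (i + 1)).take ((2 * r - 2) * c))
            ++ (P i).drop ((2 * r - 1) * c) := by
          congr 1
          · rw [hβ' i h]; exact bxor_cancel_s9 _ _ (by rw [hXlen, hTlen])
          · have hlend : ((P i).drop ((2 * r - 1) * c)).length = c := by
              rw [List.length_drop, hP, show 2 * r * c - (2 * r - 1) * c = c by
                rw [← Nat.sub_mul, show 2 * r - (2 * r - 1) = 1 by omega, one_mul]]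
            exact zeros_bxor' _ _ hlend
      _ = FS (i + 1) ++ γ (i + 1) ++ β (i + 1) := by
          rw [List.append_assoc, List.append_assoc, ← hdrop, List.take_append_drop,
            ← List.append_assoc]
  -- part (c)
  have hll : l - 1 < l := by omega
  have partc : substr (bxor (β (l - 1) ++ zeros c) (P (l - 1))) 0 (r * c - 1) = A := by
    rw [substr_take _ _ (mone _ (by omega)), bxor_take]
    have h1 : (β (l - 1) ++ zeros c).take (r * c) = (β (l - 1)).take (r * c) := by
      rw [List.take_append, βlen _ hll,
        show r * c - (2 * r - 1) * c = 0 by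
          have := mle r (2 * r - 1) (by omega); omega,
        List.take_zero, List.append_nil]
    have h2 : (β (l - 1)).take (r * c) = bxor A ((P (l - 1)).take (r * c)) := by
      have hAρ : (A ++ ρ).length = (2 * r - l) * c := by
        rw [List.length_append, hA, hρ, ← Nat.add_mul,
          show r + (r - l) = 2 * r - l by omega]
      have hblen : (bxor (A ++ ρ) ((P (l - 1)).take ((2 * r - l) * c))).length
          = (2 * r - l) * c := by
        rw [bxor_length_s9, hAρ, List.length_take, hP,
          min_eq_left (mle _ _ (by omega)), min_self]
      rw [hβlast', List.take_append, hblen,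
        show r * c - (2 * r - l) * c = 0 by
          have := mle r (2 * r - l) (by omega); omega,
        List.take_zero, List.append_nil, bxor_take, List.take_left' hA,
        List.take_take, min_eq_left (mle _ _ (by omega))]
    rw [h1, h2]
    apply bxor_cancel_s9
    rw [hA, List.length_take, hP, min_eq_left (mle _ _ (by omega))]
  exact ⟨parta, partb, partc⟩
end
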